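/- If T is a tree (a connected acyclic graph), then every edge general position set of T has cardinality at most the number of pendant edges of T. -/

import Mathlib

open SimpleGraph

/-- A walk is a geodesic if its length equals the distance between its endpoints. -/
def IsGeodesic {V : Type*} (G : SimpleGraph V) {u v : V} (p : G.Walk u v) : Prop :=
  p.length = G.dist u v

/-- A set `S` of edges of `G` is an edge general position set if no geodesic of `G`
contains three (distinct) edges of `S`. -/
def IsEdgeGPSet {V : Type*} (G : SimpleGraph V) (S : Set (Sym2 V)) : Prop :=
  S ⊆ G.edgeSet ∧
  ∀ ⦃u v : V⦄ (p : G.Walk u v), IsGeodesic G p →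
    ∀ e₁ ∈ S, ∀ e₂ ∈ S, ∀ e₃ ∈ S,
      e₁ ∈ p.edges → e₂ ∈ p.edges → e₃ ∈ p.edges →
        e₁ = e₂ ∨ e₁ = e₃ ∨ e₂ = e₃

/-- The set of pendant edges of `G`: edges having an endpoint of degree one. -/
def pendantEdges {V : Type*} [Fintype V] (G : SimpleGraph V) [DecidableRel G.Adj] :
    Set (Sym2 V) :=
  {e ∈ G.edgeSet | ∃ v ∈ e, G.degree v = 1}

set_option linter.unusedSectionVars false
namespace EGPaux

variable {V : Type*} [DecidableEq V] {G : SimpleGraph V}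

lemma path_len (hT : G.IsTree) {u v : V} {p : G.Walk u v} (hp : p.IsPath) :
    p.length = G.dist u v := by
  obtain ⟨q, hq⟩ := hT.isConnected.exists_walk_length_eq_dist u v
  have hbp : q.bypass.IsPath := q.bypass_isPath
  have h1 : q.bypass.length ≤ q.length := q.length_bypass_le
  have h2 : G.dist u v ≤ q.bypass.length := G.dist_le q.bypass
  have h3 : p = q.bypass := by
    have h := hT.existsUnique_path u v
    exact (h.unique hp hbp)
  rw [h3]; omega

lemma exists_path (hT : G.IsTree) (u v : V) : ∃ p : G.Walk u v, p.IsPath := by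
  obtain ⟨q⟩ := hT.isConnected.preconnected u v
  exact ⟨q.bypass, q.bypass_isPath⟩

lemma dist_split (hT : G.IsTree) {u v x : V} {p : G.Walk u v} (hp : p.IsPath)
    (hx : x ∈ p.support) : G.dist u v = G.dist u x + G.dist x v := by
  have h1 := path_len hT (hp.takeUntil hx)
  have h2 := path_len hT (hp.dropUntil hx)
  have h3 := congrArg Walk.length (p.take_spec hx)
  rw [Walk.length_append] at h3
  have h4 := path_len hT hp
  omega

lemma dist_adj {u v : V} (h : G.Adj u v) : G.dist u v = 1 :=
  dist_eq_one_iff_adj.mpr h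

lemma dist_ne (hT : G.IsTree) {u v : V} (h : G.Adj u v) (w : V) :
    G.dist w u ≠ G.dist w v := by
  intro heq
  obtain ⟨p, hp⟩ := exists_path hT w u
  have hv : v ∉ p.support := by
    intro hv
    have h1 := dist_split hT hp hv
    have h2 : G.dist v u = 1 := dist_adj h.symm
    omega
  have hq : (Walk.cons h.symm p.reverse).IsPath := by
    refine hp.reverse.cons ?_
    simpa using hv
  have hl := path_len hT hq
  simp only [Walk.length_cons, Walk.length_reverse] at hl
  have h5 := path_len hT hp
  rw [dist_comm] at hl
  omega


lemma self_side (hT : G.IsTree) {x y : V} (h : G.Adj x y) : G.dist x x < G.dist x y := by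
  rw [dist_self]
  exact hT.isConnected.pos_dist_of_ne h.ne

lemma cut (hT : G.IsTree) {u v w w' : V} (h : G.Adj u v) (h' : G.Adj w w')
    (hw : G.dist w u < G.dist w v) (hw' : G.dist w' v < G.dist w' u) :
    s(w, w') = s(u, v) := by
  by_contra hne
  have huv : G.dist u v = 1 := dist_adj h
  have hww' : G.dist w w' = 1 := dist_adj h'
  have t1 := hT.isConnected.dist_triangle (u := w) (v := u) (w := v)
  have t2 := hT.isConnected.dist_triangle (u := w') (v := v) (w := u)
  have t3 := hT.isConnected.dist_triangle (u := w') (v := w) (w := u)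
  have t4 := hT.isConnected.dist_triangle (u := w) (v := w') (w := u)
  have t5 := hT.isConnected.dist_triangle (u := w) (v := w') (w := v)
  have t6 := hT.isConnected.dist_triangle (u := w') (v := w) (w := v)
  have c1 : G.dist v u = G.dist u v := by rw [SimpleGraph.dist_comm]
  have c2 : G.dist w' w = G.dist w w' := by rw [SimpleGraph.dist_comm]
  rw [c1] at t2
  rw [c2] at t3
  rw [c2] at t6
  -- dist w v = dist w u + 1, dist w' u = dist w' v + 1, dist w' v = dist w u
  obtain ⟨p, hp⟩ := exists_path hT w u
  have hplen := path_len hT hp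
  have hvns : v ∉ p.support := by
    intro hv
    have h1 := dist_split hT hp hv
    have h2 : G.dist v u = 1 := dist_adj h.symm
    omega
  have hw'ns : w' ∉ p.support := by
    intro hmem
    have h1 := dist_split hT hp hmem
    omega
  have hq : (Walk.cons h'.symm p).IsPath := hp.cons hw'ns
  -- the other path from w' to u through v
  obtain ⟨r0, hr0⟩ := exists_path hT w' v
  have hr0len := path_len hT hr0
  have huns : u ∉ r0.support := by
    intro hmem
    have h1 := dist_split hT hr0 hmem
    have h2 : G.dist u v = 1 := dist_adj h
    omega
  have hs : (Walk.cons h (r0.reverse)).IsPath := by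
    refine hr0.reverse.cons ?_
    simpa using huns
  have hr : (Walk.cons h (r0.reverse)).reverse.IsPath := hs.reverse
  have hequ : Walk.cons h'.symm p = (Walk.cons h (r0.reverse)).reverse :=
    (hT.existsUnique_path w' u).unique hq hr
  have hmem : s(u, v) ∈ (Walk.cons h (r0.reverse)).reverse.edges := by
    rw [Walk.edges_reverse, List.mem_reverse, Walk.edges_cons]
    exact List.mem_cons_self
  rw [← hequ, Walk.edges_cons] at hmem
  rcases List.mem_cons.mp hmem with hc | hc
  · exact hne (by rw [Sym2.eq_swap]; exact hc.symm)
  · exact hvns (p.snd_mem_support_of_mem_edges hc)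

lemma side_walk (hT : G.IsTree) {u v : V} (h : G.Adj u v) :
    ∀ {w z : V} (q : G.Walk w z), s(u, v) ∉ q.edges →
      G.dist w u < G.dist w v → G.dist z u < G.dist z v := by
  intro w z q
  induction q with
  | nil => exact fun _ hw => hw
  | @cons w m z h' p ih =>
    intro hne hw
    have hmside : G.dist m u < G.dist m v := by
      rcases lt_or_gt_of_ne (dist_ne hT h m) with hc | hc
      · exact hc
      · exfalso
        have := cut hT h h' hw hc
        rw [Walk.edges_cons] at hne
        exact hne (this ▸ List.mem_cons_self (a := s(w, m)) (l := p.edges))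
    refine ih ?_ hmside
    rw [Walk.edges_cons] at hne
    exact fun hc => hne (List.mem_cons_of_mem _ hc)

lemma crossing (hT : G.IsTree) {u v w z : V} (h : G.Adj u v) (q : G.Walk w z)
    (hw : G.dist w u < G.dist w v) (hz : G.dist z v < G.dist z u) :
    s(u, v) ∈ q.edges := by
  by_contra hne
  have := side_walk hT h q hne hw
  omega

lemma same_side_of_adj (hT : G.IsTree) {z t x y : V} (hg : G.Adj z t) (hf : G.Adj x y)
    (hne : s(x, y) ≠ s(z, t)) (hx : G.dist x t < G.dist x z) : G.dist y t < G.dist y z := by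
  rcases lt_or_gt_of_ne (dist_ne hT hg.symm y) with hc | hc
  · exact hc
  · exfalso
    have hmem : s(t, z) ∈ (Walk.cons hf Walk.nil).edges :=
      crossing hT hg.symm _ hx hc
    simp only [Walk.edges_cons, Walk.edges_nil, List.mem_singleton] at hmem
    exact hne (hmem.symm.trans Sym2.eq_swap)

lemma two_edges_core (hT : G.IsTree) {x y z t : V} (hf : G.Adj x y) (hg : G.Adj z t)
    (hxt : G.dist x t < G.dist x z) (hzy : G.dist z y < G.dist z x) :
    ∀ q : G.Walk x z, s(x, y) ∈ q.edges ∧ s(z, t) ∈ q.edges := by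
  intro q
  constructor
  · exact crossing hT hf q (self_side hT hf) hzy
  · have := crossing hT hg.symm q hxt (self_side hT hg)
    rwa [Sym2.eq_swap] at this

lemma two_edges (hT : G.IsTree) {x y z t : V} (hf : G.Adj x y) (hg : G.Adj z t)
    (hne : s(x, y) ≠ s(z, t)) :
    ∃ x' z', x' ∈ s(x, y) ∧ z' ∈ s(z, t) ∧
      ∀ q : G.Walk x' z', s(x, y) ∈ q.edges ∧ s(z, t) ∈ q.edges := by
  have hne' : s(x, y) ≠ s(t, z) := by rw [Sym2.eq_swap (a := t)]; exact hne
  have hne2 : s(z, t) ≠ s(x, y) := hne.symm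
  have hne2' : s(z, t) ≠ s(y, x) := by rw [Sym2.eq_swap (a := y)]; exact hne2
  rcases lt_or_gt_of_ne (dist_ne hT hg.symm x) with hxside | hxside
  · -- x (hence y) is t-side of g
    have hyside : G.dist y t < G.dist y z := same_side_of_adj hT hg hf hne hxside
    rcases lt_or_gt_of_ne (dist_ne hT hf.symm z) with hzside | hzside
    · -- z (hence t) is y-side of f
      exact ⟨x, z, Sym2.mem_mk_left _ _, Sym2.mem_mk_left _ _,
        two_edges_core hT hf hg hxside hzside⟩
    · -- z (hence t) is x-side of f
      have htside : G.dist t x < G.dist t y := by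
        have := same_side_of_adj hT hf.symm hg hne2' (x := z) (y := t) hzside
        exact this
      refine ⟨y, z, Sym2.mem_mk_right _ _, Sym2.mem_mk_left _ _, fun q => ?_⟩
      have := two_edges_core hT hf.symm hg hyside hzside q
      rwa [Sym2.eq_swap (a := y)] at this
  · -- x (hence y) is z-side of g
    have hyside : G.dist y z < G.dist y t := same_side_of_adj hT hg.symm hf hne' hxside
    rcases lt_or_gt_of_ne (dist_ne hT hf.symm t) with htside | htside
    · -- t is y-side of f
      refine ⟨x, t, Sym2.mem_mk_left _ _, Sym2.mem_mk_right _ _, fun q => ?_⟩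
      have := two_edges_core hT hf hg.symm hxside htside q
      rwa [Sym2.eq_swap (a := t)] at this
    · -- t is x-side of f
      refine ⟨y, t, Sym2.mem_mk_right _ _, Sym2.mem_mk_right _ _, fun q => ?_⟩
      have := two_edges_core hT hf.symm hg.symm hyside htside q
      rw [Sym2.eq_swap (a := y), Sym2.eq_swap (a := t)] at this
      exact this

lemma exists_leaf [Fintype V] [DecidableRel G.Adj] (hT : G.IsTree) {a b : V}
    (h : G.Adj a b) :
    ∃ ℓ m, G.Adj ℓ m ∧ G.degree ℓ = 1 ∧ G.dist ℓ a < G.dist ℓ b := by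
  obtain ⟨ℓ, hℓmem, hmax⟩ := Finset.exists_max_image
    (Finset.univ.filter fun w => G.dist w a < G.dist w b) (fun w => G.dist w b)
    ⟨a, by simpa using self_side hT h⟩
  simp only [Finset.mem_filter, Finset.mem_univ, true_and] at hℓmem
  have hmax' : ∀ w, G.dist w a < G.dist w b → G.dist w b ≤ G.dist ℓ b := by
    intro w hw
    exact hmax w (by simp [hw])
  have hℓb : ℓ ≠ b := by
    intro he
    rw [he, SimpleGraph.dist_self] at hℓmem
    omega
  have hdpos : 0 < G.dist ℓ b := lt_of_le_of_lt (Nat.zero_le _) hℓmem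
  obtain ⟨p, hp⟩ := exists_path hT ℓ b
  have hplen := path_len hT hp
  cases p with
  | nil => rw [← hplen] at hdpos; simp at hdpos
  | @cons _ m _ hm q =>
    rw [Walk.cons_isPath_iff] at hp
    have hqlen := path_len hT hp.1
    rw [Walk.length_cons] at hplen
    refine ⟨ℓ, m, hm, ?_, hℓmem⟩
    have huniq : ∀ m', G.Adj ℓ m' → m' = m := by
      intro m' hm'
      by_contra hne
      have hdm' : G.dist ℓ m' = 1 := dist_adj hm'
      have tri1 := hT.isConnected.dist_triangle (u := m') (v := ℓ) (w := b)
      have tri2 := hT.isConnected.dist_triangle (u := ℓ) (v := m') (w := b)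
      have cm : G.dist m' ℓ = G.dist ℓ m' := by rw [SimpleGraph.dist_comm]
      rw [cm] at tri1
      have hneq : G.dist b ℓ ≠ G.dist b m' := dist_ne hT hm' b
      have cb1 : G.dist b ℓ = G.dist ℓ b := by rw [SimpleGraph.dist_comm]
      have cb2 : G.dist b m' = G.dist m' b := by rw [SimpleGraph.dist_comm]
      rw [cb1, cb2] at hneq
      rcases lt_or_gt_of_ne hneq with hc | hc
      · -- dist m' b = dist ℓ b + 1 : m' would be farther on a-side
        have hm'b : G.dist m' b = G.dist ℓ b + 1 := by omega
        have hsne : s(a, b) ≠ s(ℓ, m') := by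
          intro heq
          have hmm : ℓ ∈ s(a, b) := heq ▸ Sym2.mem_mk_left ℓ m'
          have hmm' : m' ∈ s(a, b) := heq ▸ Sym2.mem_mk_right ℓ m'
          rcases Sym2.mem_iff.mp hmm with rfl | rfl
          · rcases Sym2.mem_iff.mp hmm' with rfl | rfl
            · exact hm'.ne rfl
            · rw [SimpleGraph.dist_self] at hm'b; omega
          · exact hℓb rfl
        have hm'side : G.dist m' a < G.dist m' b := by
          refine side_walk hT h (Walk.cons hm' Walk.nil) ?_ hℓmem
          simp only [Walk.edges_cons, Walk.edges_nil, List.mem_singleton]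
          exact fun hc2 => hsne hc2
        have := hmax' m' hm'side
        omega
      · -- dist m' b = dist ℓ b - 1 : two distinct paths from ℓ to b
        have hm'b : G.dist m' b + 1 = G.dist ℓ b := by omega
        obtain ⟨q', hq'⟩ := exists_path hT m' b
        have hq'len := path_len hT hq'
        have hℓq' : ℓ ∉ q'.support := by
          intro hmem
          have h1 := dist_split hT hq' hmem
          have h2 : 0 < G.dist m' ℓ := hT.isConnected.pos_dist_of_ne (fun hc2 => hm'.ne hc2.symm)
          omega
        have hp2 : (Walk.cons hm' q').IsPath := hq'.cons hℓq'
        have hp1 : (Walk.cons hm q).IsPath := by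
          rw [Walk.cons_isPath_iff]; exact hp
        have heqw : Walk.cons hm q = Walk.cons hm' q' :=
          (hT.existsUnique_path ℓ b).unique hp1 hp2
        have hsupp := congrArg Walk.support heqw
        rw [Walk.support_cons, Walk.support_cons, q.support_eq_cons, q'.support_eq_cons]
          at hsupp
        simp only [List.cons.injEq] at hsupp
        exact hne hsupp.2.1.symm
    have hmem : m ∈ G.neighborFinset ℓ := (G.mem_neighborFinset ℓ m).mpr hm
    have : G.neighborFinset ℓ = {m} := by
      apply Finset.eq_singleton_iff_unique_mem.mpr
      exact ⟨hmem, fun x hx => huniq x ((G.mem_neighborFinset ℓ x).mp hx)⟩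
    rw [SimpleGraph.degree, this, Finset.card_singleton]

lemma good_side [Fintype V] [DecidableRel G.Adj] (hT : G.IsTree) {S : Set (Sym2 V)}
    {a b : V} (hab : G.Adj a b)
    (hGood : ∀ f ∈ S, f ≠ s(a, b) → ∀ x ∈ f, G.dist x b < G.dist x a) :
    ∃ p ∈ pendantEdges G, ∃ ℓ ∈ p, G.degree ℓ = 1 ∧
      ∀ f ∈ S, f ≠ s(a, b) → ∀ x ∈ f, ∀ q : G.Walk ℓ x, s(a, b) ∈ q.edges := by
  obtain ⟨ℓ, m, hlm, hdeg, hside⟩ := exists_leaf hT hab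
  refine ⟨s(ℓ, m), ⟨(G.mem_edgeSet).mpr hlm, ℓ, Sym2.mem_mk_left _ _, hdeg⟩,
    ℓ, Sym2.mem_mk_left _ _, hdeg, ?_⟩
  intro f hf hfe x hx q
  exact crossing hT hab q hside (hGood f hf hfe x hx)

lemma main_exists [Fintype V] [DecidableRel G.Adj] (hT : G.IsTree) {S : Set (Sym2 V)}
    (hS : IsEdgeGPSet G S) {e : Sym2 V} (he : e ∈ S) :
    ∃ p ∈ pendantEdges G, ∃ ℓ ∈ p, G.degree ℓ = 1 ∧
      ∀ f ∈ S, f ≠ e → ∀ x ∈ f, ∀ q : G.Walk ℓ x, e ∈ q.edges := by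
  obtain ⟨a, b, rfl⟩ : ∃ a b, e = s(a, b) := ⟨e.out.1, e.out.2, e.out_eq.symm⟩
  have hab : G.Adj a b := (G.mem_edgeSet).mp (hS.1 he)
  by_cases hA : ∀ f ∈ S, f ≠ s(a, b) → ∀ x ∈ f, G.dist x b < G.dist x a
  · exact good_side hT hab hA
  by_cases hB : ∀ f ∈ S, f ≠ s(b, a) → ∀ x ∈ f, G.dist x a < G.dist x b
  · have := good_side hT hab.symm hB
    rwa [Sym2.eq_swap (a := b)] at this
  exfalso
  push_neg at hA hB
  obtain ⟨f, hfS, hfne, x₀, hx₀f, hx₀⟩ := hA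
  obtain ⟨g, hgS, hgne, z₀, hz₀g, hz₀⟩ := hB
  rw [← Sym2.eq_swap (a := a)] at hgne
  have hfadjm : G.Adj a b := hab
  -- x₀ is a-side
  have hx₀' : G.dist x₀ a < G.dist x₀ b := by
    rcases lt_or_gt_of_ne (dist_ne hT hab x₀) with hc | hc
    · exact hc
    · omega
  have hz₀' : G.dist z₀ b < G.dist z₀ a := by
    rcases lt_or_gt_of_ne (dist_ne hT hab z₀) with hc | hc
    · omega
    · exact hc
  obtain ⟨y, rfl⟩ : ∃ y, f = s(x₀, y) := Sym2.mem_iff_exists.mp hx₀f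
  obtain ⟨t, rfl⟩ : ∃ t, g = s(z₀, t) := Sym2.mem_iff_exists.mp hz₀g
  have hfadj : G.Adj x₀ y := (G.mem_edgeSet).mp (hS.1 hfS)
  have hgadj : G.Adj z₀ t := (G.mem_edgeSet).mp (hS.1 hgS)
  -- y is a-side too
  have hy' : G.dist y a < G.dist y b := by
    have hne2 : s(x₀, y) ≠ s(b, a) := by
      rw [Sym2.eq_swap (a := b)]; exact hfne
    exact same_side_of_adj hT hab.symm hfadj hne2 hx₀'
  have ht' : G.dist t b < G.dist t a := same_side_of_adj hT hab hgadj hgne hz₀'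
  have hfg : s(x₀, y) ≠ s(z₀, t) := by
    intro heq
    have : x₀ ∈ s(z₀, t) := heq ▸ Sym2.mem_mk_left x₀ y
    rcases Sym2.mem_iff.mp this with rfl | rfl
    · omega
    · omega
  obtain ⟨x', z', hx'f, hz'g, hq⟩ := two_edges hT hfadj hgadj hfg
  have hx'a : G.dist x' a < G.dist x' b := by
    rcases Sym2.mem_iff.mp hx'f with rfl | rfl
    · exact hx₀'
    · exact hy'
  have hz'b : G.dist z' b < G.dist z' a := by
    rcases Sym2.mem_iff.mp hz'g with rfl | rfl
    · exact hz₀'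
    · exact ht'
  obtain ⟨P, hP⟩ := exists_path hT x' z'
  have hgeo : IsGeodesic G P := path_len hT hP
  obtain ⟨hfP, hgP⟩ := hq P
  have heP : s(a, b) ∈ P.edges := crossing hT hab P hx'a hz'b
  rcases hS.2 P hgeo _ hfS _ he _ hgS hfP heP hgP with hc | hc | hc
  · exact hfne hc
  · exact hfg hc
  · exact hgne hc.symm

lemma inj_case (hT : G.IsTree) {S : Set (Sym2 V)} (hS : IsEdgeGPSet G S)
    {e e' : Sym2 V} (he : e ∈ S) (he' : e' ∈ S) (hne : e ≠ e') {ℓ : V}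
    (hsep : ∀ f ∈ S, f ≠ e → ∀ x ∈ f, ∀ q : G.Walk ℓ x, e ∈ q.edges)
    (hsep' : ∀ f ∈ S, f ≠ e' → ∀ x ∈ f, ∀ q : G.Walk ℓ x, e' ∈ q.edges) : False := by
  obtain ⟨a, b, hrep, hle⟩ : ∃ a b, e = s(a, b) ∧ G.dist ℓ a ≤ G.dist ℓ b := by
    rcases le_total (G.dist ℓ e.out.1) (G.dist ℓ e.out.2) with hc | hc
    · exact ⟨e.out.1, e.out.2, e.out_eq.symm, hc⟩
    · exact ⟨e.out.2, e.out.1, by rw [Sym2.eq_swap]; exact e.out_eq.symm, hc⟩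
  subst hrep
  have hab : G.Adj a b := (G.mem_edgeSet).mp (hS.1 he)
  obtain ⟨P, hP⟩ := exists_path hT ℓ a
  have hePn : s(a, b) ∉ P.edges := by
    intro hmem
    have hb := P.snd_mem_support_of_mem_edges hmem
    have h1 := dist_split hT hP hb
    have h2 : G.dist b a = 1 := dist_adj hab.symm
    omega
  have he'P : e' ∈ P.edges :=
    hsep' s(a, b) he hne a (Sym2.mem_mk_left _ _) P
  obtain ⟨c, d, hrep'⟩ : ∃ c d, e' = s(c, d) := ⟨e'.out.1, e'.out.2, e'.out_eq.symm⟩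
  subst hrep'
  have hc : c ∈ P.support := P.fst_mem_support_of_mem_edges he'P
  have heQ : s(a, b) ∈ (P.takeUntil c hc).edges :=
    hsep s(c, d) he' hne.symm c (Sym2.mem_mk_left _ _) _
  exact hePn (P.edges_takeUntil_subset hc heQ)

lemma confined [Fintype V] [DecidableRel G.Adj] (hT : G.IsTree) {ℓ ℓ' : V}
    (h1 : G.degree ℓ = 1) (h2 : G.degree ℓ' = 1) (hll : G.Adj ℓ ℓ')
    {x y : V} (hxy : G.Adj x y) : s(x, y) = s(ℓ, ℓ') := by
  have nb : ∀ z w w', G.degree z = 1 → G.Adj z w → G.Adj z w' → w = w' := by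
    intro z w w' hd ha ha'
    have hcard : (G.neighborFinset z).card ≤ 1 := le_of_eq hd
    exact Finset.card_le_one.mp hcard w ((G.mem_neighborFinset z w).mpr ha)
      w' ((G.mem_neighborFinset z w').mpr ha')
  have conf : ∀ {s z : V} (_ : G.Walk s z), s = ℓ ∨ s = ℓ' → z = ℓ ∨ z = ℓ' := by
    intro s z q
    induction q with
    | nil => exact fun h => h
    | @cons s m z hadj p ih =>
      intro hs
      apply ih
      rcases hs with rfl | rfl
      · exact Or.inr (nb s ℓ' m h1 hll hadj).symm
      · exact Or.inl (nb s ℓ m h2 hll.symm hadj).symm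
  have hx : x = ℓ ∨ x = ℓ' := conf (hT.isConnected.preconnected ℓ x).some (Or.inl rfl)
  have hy : y = ℓ ∨ y = ℓ' := conf (hT.isConnected.preconnected ℓ y).some (Or.inl rfl)
  rcases hx with rfl | rfl <;> rcases hy with rfl | rfl
  · exact absurd rfl hxy.ne
  · rfl
  · exact Sym2.eq_swap
  · exact absurd rfl hxy.ne

end EGPaux

/-- If `T` is a tree, then every edge general position set of `T` has cardinality at most
the number of pendant edges of `T`. -/
theorem egp_le_pendantEdges_of_tree {V : Type*} [Fintype V] (G : SimpleGraph V)
    [DecidableRel G.Adj] (hT : G.IsTree) (S : Set (Sym2 V)) (hS : IsEdgeGPSet G S) :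
    S.ncard ≤ (pendantEdges G).ncard := by
  classical
  obtain ⟨v₀⟩ := hT.isConnected.nonempty
  have main : ∀ e : Sym2 V, ∃ p ℓ, e ∈ S → (p ∈ pendantEdges G ∧ ℓ ∈ p ∧ G.degree ℓ = 1 ∧
      ∀ f ∈ S, f ≠ e → ∀ x ∈ f, ∀ q : G.Walk ℓ x, e ∈ q.edges) := by
    intro e
    by_cases he : e ∈ S
    · obtain ⟨p, hp1, ℓ, hℓ, hdeg, hsep⟩ := EGPaux.main_exists hT hS he
      exact ⟨p, ℓ, fun _ => ⟨hp1, hℓ, hdeg, hsep⟩⟩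
    · exact ⟨s(v₀, v₀), v₀, fun h => absurd h he⟩
  choose F L hmain using main
  have hF : ∀ e ∈ S, F e ∈ pendantEdges G := fun e he => (hmain e he).1
  have hL : ∀ e ∈ S, L e ∈ F e := fun e he => (hmain e he).2.1
  have hdeg : ∀ e ∈ S, G.degree (L e) = 1 := fun e he => (hmain e he).2.2.1
  have hsep : ∀ e ∈ S, ∀ f ∈ S, f ≠ e → ∀ x ∈ f, ∀ q : G.Walk (L e) x, e ∈ q.edges :=
    fun e he => (hmain e he).2.2.2
  have hinj : Set.InjOn F S := by
    intro e he e' he' heq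
    by_contra hne
    by_cases hll : L e = L e'
    · refine EGPaux.inj_case hT hS he he' hne (hsep e he) ?_
      rw [hll]; exact hsep e' he'
    · have hmm : L e ∈ F e := hL e he
      have hmm' : L e' ∈ F e := heq ▸ hL e' he'
      have hpe : F e = s(L e, L e') := (Sym2.mem_and_mem_iff hll).mp ⟨hmm, hmm'⟩
      have hadj : G.Adj (L e) (L e') := (G.mem_edgeSet).mp
        (by rw [← hpe]; exact (hF e he).1)
      obtain ⟨c, d, hrep⟩ : ∃ c d, e = s(c, d) := ⟨e.out.1, e.out.2, e.out_eq.symm⟩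
      obtain ⟨c', d', hrep'⟩ : ∃ c d, e' = s(c, d) := ⟨e'.out.1, e'.out.2, e'.out_eq.symm⟩
      have hcd : G.Adj c d := (G.mem_edgeSet).mp (hS.1 (hrep ▸ he))
      have hcd' : G.Adj c' d' := (G.mem_edgeSet).mp (hS.1 (hrep' ▸ he'))
      have h1 := EGPaux.confined hT (hdeg e he) (hdeg e' he') hadj hcd
      have h2 := EGPaux.confined hT (hdeg e he) (hdeg e' he') hadj hcd'
      exact hne (by rw [hrep, hrep', h1, h2])
  calc S.ncard = (F '' S).ncard := (Set.ncard_image_of_injOn hinj).symm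
    _ ≤ (pendantEdges G).ncard := Set.ncard_le_ncard
        (by rintro _ ⟨e, he, rfl⟩; exact hF e he) (Set.toFinite _)
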